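/- Let G be a finite connected simple graph and let H be a connected induced subgraph of G such that every edge of G incident to a vertex of H is a cut-edge (bridge) of G. Then every vertex of H either has degree 1 in G, or belongs to no minimum MEG-set of G. -/

import Mathlib

open SimpleGraph

/-- A pair of vertices `u`, `v` monitors an edge `e` if `u` and `v` are reachable from
each other and `e` belongs to every shortest path (walk of length `G.dist u v`)
between `u` and `v`. -/
def Monitors {V : Type*} (G : SimpleGraph V) (u v : V) (e : Sym2 V) : Prop :=
  G.Reachable u v ∧ ∀ p : G.Walk u v, p.length = G.dist u v → e ∈ p.edges

/-- A monitoring edge-geodetic set of `G`: every edge of `G` is monitored by some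
pair of vertices of `M`. -/
def IsMEGSet {V : Type*} (G : SimpleGraph V) (M : Set V) : Prop :=
  ∀ e ∈ G.edgeSet, ∃ u ∈ M, ∃ v ∈ M, Monitors G u v e

/-- The monitoring edge-geodetic number of `G`: the minimum size of an MEG-set. -/
noncomputable def meg {V : Type*} [Fintype V] (G : SimpleGraph V) : ℕ :=
  sInf {n : ℕ | ∃ M : Finset V, IsMEGSet G ↑M ∧ M.card = n}

section Aux

variable {V : Type*} {G : SimpleGraph V}

lemma monitors_comm {u v : V} {e : Sym2 V} (h : Monitors G u v e) : Monitors G v u e := by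
  refine ⟨h.1.symm, fun p hp => ?_⟩
  have := h.2 p.reverse (by rw [SimpleGraph.Walk.length_reverse, hp, SimpleGraph.dist_comm])
  rwa [SimpleGraph.Walk.edges_reverse, List.mem_reverse] at this

lemma not_monitors_self {v : V} {e : Sym2 V} : ¬ Monitors G v v e := by
  rintro ⟨_, h⟩
  have := h SimpleGraph.Walk.nil (by simp [SimpleGraph.dist_self])
  simp at this

lemma ne_of_monitors {u v : V} {e : Sym2 V} (h : Monitors G u v e) : u ≠ v := by
  rintro rfl; exact not_monitors_self h

lemma reachable_sdiff_of_avoid {v w x y : V} (t : G.Walk x y)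
    (h : s(v, w) ∉ t.edges) : (G \ fromEdgeSet {s(v, w)}).Reachable x y := by
  refine ⟨t.transfer _ fun e ep => ?_⟩
  simp only [SimpleGraph.edgeSet_sdiff, SimpleGraph.edgeSet_fromEdgeSet,
    SimpleGraph.edgeSet_sdiff_sdiff_isDiag, Set.mem_diff, Set.mem_singleton_iff]
  exact ⟨t.edges_subset_edgeSet ep, fun h' => h (h' ▸ ep)⟩

lemma cross_of_not_reachable {v w b : V}
    (hnb : ¬(G \ fromEdgeSet {s(v, w)}).Reachable b v)
    (t : G.Walk b v) : s(v, w) ∈ t.edges := by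
  by_contra hne
  exact hnb (reachable_sdiff_of_avoid t hne)

lemma trail_cross_aux {v w : V} :
    ∀ {x y : V} (t : G.Walk x y), t.IsTrail → s(v, w) ∈ t.edges →
      (G \ fromEdgeSet {s(v, w)}).Reachable x v →
      (G \ fromEdgeSet {s(v, w)}).Reachable y v →
      (G \ fromEdgeSet {s(v, w)}).Reachable v w := by
  intro x y t
  induction t with
  | nil => simp
  | @cons a b c h t ih =>
    intro htrail hmem hx hy
    rw [SimpleGraph.Walk.isTrail_cons] at htrail
    by_cases heq : s(v, w) = s(a, b)
    · have hab : (v = a ∧ w = b) ∨ (v = b ∧ w = a) := Sym2.eq_iff.mp heq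
      rcases hab with ⟨rfl, rfl⟩ | ⟨rfl, rfl⟩
      · -- a = v, b = w, and the tail avoids s(v,w)
        have havoid : s(v, w) ∉ t.edges := heq ▸ htrail.2
        have hwc : (G \ fromEdgeSet {s(v, w)}).Reachable w c :=
          reachable_sdiff_of_avoid t havoid
        exact (hwc.trans hy).symm
      · exact hx.symm
    · have hx' : (G \ fromEdgeSet {s(v, w)}).Reachable b v := by
        have hadj : (G \ fromEdgeSet {s(v, w)}).Adj a b := by
          rw [SimpleGraph.sdiff_adj, SimpleGraph.fromEdgeSet_adj]
          exact ⟨h, by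
            rintro ⟨hmem', -⟩
            rw [Set.mem_singleton_iff] at hmem'
            exact heq hmem'.symm⟩
        exact (hadj.symm.reachable).trans hx
      have hmem' : s(v, w) ∈ t.edges := by
        rw [SimpleGraph.Walk.edges_cons, List.mem_cons] at hmem
        rcases hmem with h' | h'
        · exact absurd h' heq
        · exact h'
      exact ih htrail.1 hmem' hx' hy

lemma monitors_bridge_side {v w a c : V} (hb : G.IsBridge s(v, w))
    (hm : Monitors G a c s(v, w)) :
    ¬(G \ fromEdgeSet {s(v, w)}).Reachable a v ∨
      ¬(G \ fromEdgeSet {s(v, w)}).Reachable c v := by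
  by_contra hcon
  push_neg at hcon
  obtain ⟨p, hpl⟩ := hm.1.exists_walk_length_eq_dist
  have hpath := p.isPath_of_length_eq_dist hpl
  have hmem := hm.2 p hpl
  exact (SimpleGraph.isBridge_iff.mp hb)
    (trail_cross_aux p hpath.isTrail hmem hcon.1 hcon.2)

end Aux

/-- if `H` (the subgraph of `G` induced by the vertex set `S`) is connected and
every edge of `G` incident to a vertex of `S` is a bridge of `G`, then every vertex of `S`
either has degree 1 in `G` or belongs to no minimum MEG-set of `G`. -/
theorem degree_one_or_not_mem_minimum_megSet {V : Type*} [Fintype V]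
    (G : SimpleGraph V) [DecidableRel G.Adj] (hG : G.Connected)
    (S : Set V) (hHconn : (G.induce S).Connected)
    (hbridge : ∀ e ∈ G.edgeSet, (∃ v ∈ S, v ∈ e) → G.IsBridge e) :
    ∀ v ∈ S, G.degree v = 1 ∨
      ∀ M : Finset V, IsMEGSet G ↑M → M.card = meg G → v ∉ M := by
  classical
  intro v hvS
  by_cases hdeg1 : G.degree v = 1
  · exact Or.inl hdeg1
  right
  intro M hMmeg hMcard hvM
  by_cases hdeg0 : G.degree v = 0
  · -- `G` has no edge at all, so `meg G = 0` and `M = ∅`, contradiction with `v ∈ M`.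
    have hnoedge : ∀ e ∈ G.edgeSet, False := by
      intro e he
      induction e using Sym2.ind with
      | _ a b =>
        rw [SimpleGraph.mem_edgeSet] at he
        have hnbr : ∀ x, ¬ G.Adj v x := by
          intro x hx
          have hxmem : x ∈ G.neighborFinset v := (SimpleGraph.mem_neighborFinset G v x).mpr hx
          have : 0 < G.degree v := by
            rw [SimpleGraph.degree]
            exact Finset.card_pos.mpr ⟨x, hxmem⟩
          omega
        obtain ⟨p⟩ := hG.preconnected v a
        cases p with
        | nil => exact hnbr b he
        | cons h' p' => exact hnbr _ h'
    have h0 : IsMEGSet G (↑(∅ : Finset V)) := fun e he => absurd (hnoedge e he) id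
    have hle : meg G ≤ 0 := Nat.sInf_le ⟨∅, h0, Finset.card_empty⟩
    have hpos : 0 < M.card := Finset.card_pos.mpr ⟨v, hvM⟩
    omega
  · have hdeg2 : 2 ≤ G.degree v := by omega
    -- key replacement lemma
    have key : ∀ (u : V) (e : Sym2 V), Monitors G v u e →
        ∃ b, b ≠ v ∧ b ∈ M ∧ Monitors G b u e := by
      intro u e hmu
      have huv : v ≠ u := ne_of_monitors hmu
      obtain ⟨q, hqpath, hqlen⟩ := hmu.1.exists_path_of_dist
      obtain ⟨w1, h1, q', rfl⟩ := SimpleGraph.Walk.exists_eq_cons_of_ne huv q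
      have hvq' : v ∉ q'.support := ((SimpleGraph.Walk.cons_isPath_iff h1 q').mp hqpath).2
      -- pick another neighbour `w ≠ w1`
      have hcard : 1 < (G.neighborFinset v).card := by
        rw [← SimpleGraph.degree]; omega
      obtain ⟨w, hwmem, hww1⟩ := Finset.exists_mem_ne hcard w1
      have hw : G.Adj v w := (SimpleGraph.mem_neighborFinset G v w).mp hwmem
      have he0 : s(v, w) ∈ G.edgeSet := hw
      have hbr : G.IsBridge s(v, w) :=
        hbridge s(v, w) he0 ⟨v, hvS, Sym2.mem_mk_left v w⟩
      -- the shortest `v-u` walk avoids the bridge `s(v,w)`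
      have hq_avoid : s(v, w) ∉ (SimpleGraph.Walk.cons h1 q').edges := by
        rw [SimpleGraph.Walk.edges_cons, List.mem_cons]
        rintro (heq | hmem)
        · exact hww1 (Sym2.congr_right.mp heq)
        · exact hvq' (q'.fst_mem_support_of_mem_edges hmem)
      -- get a monitor of the bridge on the `w`-side
      obtain ⟨a, haM, c, hcM, hmac⟩ := hMmeg s(v, w) he0
      have hside := monitors_bridge_side hbr hmac
      obtain ⟨b, hbM, hnb⟩ :
          ∃ b, b ∈ M ∧ ¬(G \ fromEdgeSet {s(v, w)}).Reachable b v := by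
        rcases hside with h | h
        · exact ⟨a, haM, h⟩
        · exact ⟨c, hcM, h⟩
      have hbv : b ≠ v := by
        rintro rfl
        exact hnb (SimpleGraph.Reachable.refl b)
      refine ⟨b, hbv, hbM, (hG.preconnected b u), fun p hplen => ?_⟩
      -- every shortest `b-u` walk must pass through `v`
      have hvp : v ∈ p.support := by
        by_contra hvp
        have hcross := cross_of_not_reachable hnb
          (p.append (SimpleGraph.Walk.cons h1 q').reverse)
        rw [SimpleGraph.Walk.edges_append, List.mem_append] at hcross
        rcases hcross with h' | h'
        · exact hvp (p.fst_mem_support_of_mem_edges h')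
        · rw [SimpleGraph.Walk.edges_reverse, List.mem_reverse] at h'
          exact hq_avoid h'
      -- split the walk at `v`
      have hspec := p.take_spec hvp
      have hlensum : (p.takeUntil v hvp).length + (p.dropUntil v hvp).length = p.length := by
        rw [← SimpleGraph.Walk.length_append, hspec]
      have d1 : G.dist b v ≤ (p.takeUntil v hvp).length := SimpleGraph.dist_le _
      have d2 : G.dist v u ≤ (p.dropUntil v hvp).length := SimpleGraph.dist_le _
      have tri : G.dist b u ≤ G.dist b v + G.dist v u := hG.dist_triangle
      have p2len : (p.dropUntil v hvp).length = G.dist v u := by omega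
      have hmem2 : e ∈ (p.dropUntil v hvp).edges := hmu.2 _ p2len
      rw [← hspec, SimpleGraph.Walk.edges_append, List.mem_append]
      exact Or.inr hmem2
    -- `M.erase v` is also an MEG-set
    have hMEG' : IsMEGSet G (↑(M.erase v)) := by
      intro e he
      obtain ⟨a0, ha0, c0, hc0, hm0⟩ := hMmeg e he
      rw [Finset.mem_coe] at ha0 hc0
      by_cases ha0v : a0 = v
      · subst ha0v
        obtain ⟨b, hbv, hbM, hmb⟩ := key c0 e hm0
        have hc0v : c0 ≠ a0 := (ne_of_monitors hm0).symm
        exact ⟨b, by simp [Finset.mem_erase, hbv, hbM], c0,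
          by simp [Finset.mem_erase, hc0v, hc0], hmb⟩
      · by_cases hc0v : c0 = v
        · subst hc0v
          obtain ⟨b, hbv, hbM, hmb⟩ := key a0 e (monitors_comm hm0)
          exact ⟨a0, by simp [Finset.mem_erase, ha0v, ha0], b,
            by simp [Finset.mem_erase, hbv, hbM], monitors_comm hmb⟩
        · exact ⟨a0, by simp [Finset.mem_erase, ha0v, ha0], c0,
            by simp [Finset.mem_erase, hc0v, hc0], hm0⟩
    have hle : meg G ≤ (M.erase v).card := Nat.sInf_le ⟨M.erase v, hMEG', rfl⟩
    have herase : (M.erase v).card = M.card - 1 := Finset.card_erase_of_mem hvM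
    have hpos : 0 < M.card := Finset.card_pos.mpr ⟨v, hvM⟩
    omega
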